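/- Let M be a 3×3 MDS matrix over F_{2^m} and let (u, v, t) with t = u + v be a related triplet such that (u, Mu) and (v, Mv) are related differentials. If wt(u) = wt(v) = 1 and wt(t) = 2, then a contradiction arises; i.e., no related-differential pair exists with input weights (1, 1, 2). -/

import Mathlib

open scoped Classical

/-- Hamming weight: number of nonzero coordinates. -/
noncomputable def wt {n : ℕ} {F : Type*} [Zero F] (u : Fin n → F) : ℕ :=
  (Finset.univ.filter fun i => u i ≠ 0).card

/-- `u` and `v` are related differences. -/
def RelDiff {n : ℕ} {F : Type*} [Field F] (u v : Fin n → F) : Prop :=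
  ∀ i, u i * v i * (u i + v i) = 0

/-- A square matrix is MDS iff every square submatrix is nonsingular. -/
def IsMDS {n : ℕ} {F : Type*} [Field F] (M : Matrix (Fin n) (Fin n) F) : Prop :=
  ∀ (k : ℕ) (r c : Fin k → Fin n), Function.Injective r → Function.Injective c →
    (M.submatrix r c).det ≠ 0

/-- An MDS matrix has all entries nonzero. -/
lemma entries_ne_zero {n : ℕ} {F : Type*} [Field F] {M : Matrix (Fin n) (Fin n) F}
    (hMDS : IsMDS M) (i j : Fin n) : M i j ≠ 0 := by
  have h := hMDS 1 ![i] ![j] (Function.injective_of_subsingleton _)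
    (Function.injective_of_subsingleton _)
  rw [Matrix.det_fin_one] at h
  simpa using h

/-- If `wt u = 1` then `M.mulVec u` has all coordinates nonzero, for MDS `M`. -/
lemma mulVec_ne_zero {n : ℕ} {F : Type*} [Field F] {M : Matrix (Fin n) (Fin n) F}
    (hMDS : IsMDS M) {u : Fin n → F} (hu : wt u = 1) (i : Fin n) : M.mulVec u i ≠ 0 := by
  obtain ⟨j, hj⟩ := Finset.card_eq_one.mp hu
  have hjmem : j ∈ Finset.univ.filter fun k => u k ≠ 0 := by rw [hj]; exact Finset.mem_singleton_self j
  have huj : u j ≠ 0 := (Finset.mem_filter.mp hjmem).2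
  have hz : ∀ k, k ≠ j → u k = 0 := by
    intro k hk
    by_contra h
    have : k ∈ Finset.univ.filter fun k => u k ≠ 0 := Finset.mem_filter.mpr ⟨Finset.mem_univ k, h⟩
    rw [hj, Finset.mem_singleton] at this
    exact hk this
  have : M.mulVec u i = M i j * u j := by
    rw [Matrix.mulVec, dotProduct]
    rw [Finset.sum_eq_single j]
    · intro k _ hk; rw [hz k hk, mul_zero]
    · intro h; exact absurd (Finset.mem_univ j) h
  rw [this]
  exact mul_ne_zero (entries_ne_zero hMDS i j) huj

/-- For a `3 × 3` MDS matrix there is no related-differential pair with input weights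
`(1, 1, 2)`. -/
theorem stmt18 (m : ℕ) (M : Matrix (Fin 3) (Fin 3) (GaloisField 2 m)) (hMDS : IsMDS M)
    (u v : Fin 3 → GaloisField 2 m)
    (h1 : RelDiff u v) (h2 : RelDiff (M.mulVec u) (M.mulVec v))
    (hu : wt u = 1) (hv : wt v = 1) (ht : wt (u + v) = 2) : False := by
  have hMsum : ∀ i, M.mulVec u i + M.mulVec v i = 0 := by
    intro i
    have := h2 i
    rcases mul_eq_zero.mp this with h | h
    · rcases mul_eq_zero.mp h with h | h
      · exact absurd h (mulVec_ne_zero hMDS hu i)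
      · exact absurd h (mulVec_ne_zero hMDS hv i)
    · exact h
  have hMuv : M.mulVec (u + v) = 0 := by
    funext i
    rw [Matrix.mulVec_add]
    exact hMsum i
  have hdet : M.det ≠ 0 := by
    have := hMDS 3 id id Function.injective_id Function.injective_id
    simpa using this
  have hinj : Function.Injective M.mulVec :=
    Matrix.mulVec_injective_iff_isUnit.mpr ((Matrix.isUnit_iff_isUnit_det M).mpr hdet.isUnit)
  have huv : u + v = 0 := by
    apply hinj
    rw [hMuv, Matrix.mulVec_zero]
  rw [huv] at ht
  simp [wt] at ht
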